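/- Let n ≥ 1 and m ≥ C(n,2) − ⌊n/2⌋. Among all simple graphs on n vertices with m edges, a graph whose complement is a matching (a set of pairwise disjoint edges) maximizes the number of acyclic orientations. -/

import Mathlib

/-- An orientation of a simple graph `G`, given as a relation `o` on vertices:
only edges of `G` are oriented, and each edge gets exactly one direction. -/
def IsOrientation {V : Type*} (G : SimpleGraph V) (o : V → V → Prop) : Prop :=
  (∀ u v, o u v → G.Adj u v) ∧ ∀ u v, G.Adj u v → (o u v ↔ ¬ o v u)

/-- An orientation is acyclic when it has no directed cycle. -/
def IsAcyclicRel {V : Type*} (o : V → V → Prop) : Prop :=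
  Irreflexive (Relation.TransGen o)

/-- `s` is a sink of the orientation `o`: no outgoing edges. -/
def IsSinkOf {V : Type*} (o : V → V → Prop) (s : V) : Prop := ∀ v, ¬ o s v

/-- The number of acyclic orientations of `G`. -/
noncomputable def aoCount {V : Type*} (G : SimpleGraph V) : ℕ :=
  Nat.card {o : V → V → Prop // IsOrientation G o ∧ IsAcyclicRel o}

/-- The number of acyclic orientations of `G` whose unique sink is `s`. -/
noncomputable def ausoCount {V : Type*} (G : SimpleGraph V) (s : V) : ℕ :=
  Nat.card {o : V → V → Prop // IsOrientation G o ∧ IsAcyclicRel o ∧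
    ∀ v, IsSinkOf o v ↔ v = s}

namespace AOProof

def mvNat (p q x : ℕ) : ℕ :=
  if x = p then q
  else if p < x ∧ x ≤ q then x - 1
  else if q ≤ x ∧ x < p then x + 1
  else x

lemma mvNat_lt {n p q x : ℕ} (hp : p < n) (hq : q < n) (hx : x < n) :
    mvNat p q x < n := by
  unfold mvNat; split_ifs <;> omega

lemma mvNat_left (p q x : ℕ) : mvNat q p (mvNat p q x) = x := by
  unfold mvNat; split_ifs <;> omega

lemma mvNat_self (p q : ℕ) : mvNat p q p = q := by unfold mvNat; simp

variable {n : ℕ}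

/-- The permutation of `Fin n` moving position `p` to position `q`. -/
def mvPerm (p q : Fin n) : Equiv.Perm (Fin n) where
  toFun x := ⟨mvNat p q x, mvNat_lt p.isLt q.isLt x.isLt⟩
  invFun x := ⟨mvNat q p x, mvNat_lt q.isLt p.isLt x.isLt⟩
  left_inv x := Fin.ext (mvNat_left p q x)
  right_inv x := Fin.ext (mvNat_left q p x)

@[simp] lemma mvPerm_val (p q x : Fin n) : (mvPerm p q x : ℕ) = mvNat p q x := rfl

lemma mvPerm_symm (p q : Fin n) : (mvPerm p q).symm = mvPerm q p := rfl

/-- Permutations realizing all adjacency constraints in `T`: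
for each `(lo,hi) ∈ T`, `lo` sits immediately after `hi`. -/
def SatP (T : Finset (Fin n × Fin n)) : Finset (Equiv.Perm (Fin n)) :=
  Finset.univ.filter fun σ => ∀ p ∈ T, (σ p.1 : ℕ) = (σ p.2 : ℕ) + 1

def NN (T : Finset (Fin n × Fin n)) : ℕ := (SatP T).card

def Compat (T : Finset (Fin n × Fin n)) : Prop :=
  (∀ p ∈ T, ∀ q ∈ T, p.1 = q.1 → p = q) ∧ (∀ p ∈ T, ∀ q ∈ T, p.2 = q.2 → p = q)

noncomputable instance (T : Finset (Fin n × Fin n)) : Decidable (Compat T) :=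
  Classical.dec _

lemma mem_SatP {T : Finset (Fin n × Fin n)} {σ : Equiv.Perm (Fin n)} :
    σ ∈ SatP T ↔ ∀ p ∈ T, (σ p.1 : ℕ) = (σ p.2 : ℕ) + 1 := by
  simp [SatP]

lemma NN_of_not_compat {T : Finset (Fin n × Fin n)} (h : ¬ Compat T) : NN T = 0 := by
  rw [NN, Finset.card_eq_zero, Finset.eq_empty_iff_forall_notMem]
  intro σ hσ
  rw [mem_SatP] at hσ
  apply h
  constructor
  · intro p hp q hq h1
    have e1 := hσ p hp; have e2 := hσ q hq
    rw [h1] at e1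
    have : σ p.2 = σ q.2 := Fin.ext (by omega)
    have : p.2 = q.2 := σ.injective this
    exact Prod.ext h1 this
  · intro p hp q hq h2
    have e1 := hσ p hp; have e2 := hσ q hq
    rw [h2] at e1
    have : σ p.1 = σ q.1 := Fin.ext (by omega)
    exact Prod.ext (σ.injective this) h2

lemma card_le_of_compat {T : Finset (Fin n × Fin n)} (hc : Compat T) : T.card ≤ n := by
  classical
  have : T.card = (T.image Prod.fst).card := by
    rw [Finset.card_image_of_injOn]
    intro p hp q hq h; exact hc.1 p hp q hq h
  rw [this]
  simpa using Finset.card_le_card (Finset.subset_univ (T.image Prod.fst))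

end AOProof

namespace AOProof
variable {n : ℕ}

def slotF (a b : Fin n) (σ : Equiv.Perm (Fin n)) : Fin n :=
  if h : (σ b : ℕ) < (σ a : ℕ) then ⟨(σ b : ℕ) + 1, Nat.lt_of_le_of_lt h (σ a).isLt⟩
  else σ b

lemma slotF_val (a b : Fin n) (σ : Equiv.Perm (Fin n)) :
    (slotF a b σ : ℕ) = if (σ b : ℕ) < (σ a : ℕ) then (σ b : ℕ) + 1 else (σ b : ℕ) := by
  unfold slotF; split_ifs <;> rfl

/-- Move `a` to the slot right after `b`. -/
def fmove (a b : Fin n) (σ : Equiv.Perm (Fin n)) : Equiv.Perm (Fin n) :=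
  σ.trans (mvPerm (σ a) (slotF a b σ))

lemma fmove_apply (a b : Fin n) (σ : Equiv.Perm (Fin n)) (x : Fin n) :
    ((fmove a b σ) x : ℕ) = mvNat (σ a) (slotF a b σ) (σ x) := rfl

/-- Move `a` to the position `r`. -/
def gmove (a : Fin n) (τ : Equiv.Perm (Fin n)) (r : Fin n) : Equiv.Perm (Fin n) :=
  τ.trans (mvPerm (τ a) r)

lemma gmove_apply (a : Fin n) (τ : Equiv.Perm (Fin n)) (r x : Fin n) :
    ((gmove a τ r) x : ℕ) = mvNat (τ a) r (τ x) := rfl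

lemma gmove_a (a : Fin n) (τ : Equiv.Perm (Fin n)) (r : Fin n) :
    (gmove a τ r) a = r := Fin.ext (by rw [gmove_apply, mvNat_self])

lemma fmove_gmove (a b : Fin n) (τ : Equiv.Perm (Fin n))
    (hτ : (τ a : ℕ) = (τ b : ℕ) + 1) (r : Fin n) : fmove a b (gmove a τ r) = τ := by
  have hga : ((gmove a τ r) a : ℕ) = r := by rw [gmove_apply, mvNat_self]
  have hgb : ((gmove a τ r) b : ℕ) = mvNat (τ a) r (τ b) := gmove_apply a τ r b
  have hbn : (τ b : ℕ) < n := (τ (b : Fin n)).isLt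
  have han : (τ a : ℕ) < n := (τ (a : Fin n)).isLt
  have hrn : (r : ℕ) < n := r.isLt
  have hslot : (slotF a b (gmove a τ r) : ℕ) = (τ a : ℕ) := by
    rw [slotF_val, hga, hgb]
    unfold mvNat; split_ifs <;> omega
  apply Equiv.ext; intro x; apply Fin.ext
  rw [fmove_apply]
  have : (slotF a b (gmove a τ r)) = Fin.mk (τ a : ℕ) han := Fin.ext hslot
  rw [this]
  have hga' : (gmove a τ r) a = r := gmove_a a τ r
  rw [hga']
  show mvNat (r : ℕ) (τ a : ℕ) ((gmove a τ r) x : ℕ) = (τ x : ℕ)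
  rw [gmove_apply, mvNat_left]

lemma eq_gmove_of_fmove_eq (a b : Fin n) (σ τ : Equiv.Perm (Fin n))
    (h : fmove a b σ = τ) : σ = gmove a τ (σ a) := by
  have hτa : τ a = slotF a b σ := by
    rw [← h]; exact Fin.ext (by rw [fmove_apply, mvNat_self])
  apply Equiv.ext; intro x; apply Fin.ext
  rw [gmove_apply, hτa, ← h]
  show (σ x : ℕ) = mvNat (slotF a b σ : ℕ) ((σ a : ℕ)) ((fmove a b σ) x : ℕ)
  rw [fmove_apply, mvNat_left]

def badslot (a : Fin n) (τ : Equiv.Perm (Fin n)) (q : Fin n × Fin n) : Fin n :=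
  if (τ a : ℕ) < (τ q.2 : ℕ) then τ q.2 else τ q.1

lemma gmove_sat_iff (a b : Fin n) (τ : Equiv.Perm (Fin n)) (r : Fin n)
    (q : Fin n × Fin n)
    (hτq : (τ q.1 : ℕ) = (τ q.2 : ℕ) + 1)
    (d1 : (τ q.1 : ℕ) ≠ (τ a : ℕ)) (d2 : (τ q.2 : ℕ) ≠ (τ a : ℕ)) :
    (((gmove a τ r) q.1 : ℕ) = ((gmove a τ r) q.2 : ℕ) + 1) ↔ (r : ℕ) ≠ (badslot a τ q : ℕ) := by
  have h1 : (τ q.1 : ℕ) < n := (τ (q.1 : Fin n)).isLt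
  have h2 : (τ q.2 : ℕ) < n := (τ (q.2 : Fin n)).isLt
  have h3 : (τ a : ℕ) < n := (τ (a : Fin n)).isLt
  have h4 : (r : ℕ) < n := r.isLt
  rw [gmove_apply, gmove_apply]
  unfold badslot
  split_ifs with h <;> (unfold mvNat; split_ifs <;> omega)

end AOProof

namespace AOProof
variable {n : ℕ}

lemma fmove_mem_SatP (T : Finset (Fin n × Fin n)) (a b : Fin n) (hab : a < b)
    (hp0 : (a, b) ∈ T)
    (hne : ∀ q ∈ T.erase (a, b), q.1 ≠ a ∧ q.2 ≠ a ∧ q.2 ≠ b)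
    (σ : Equiv.Perm (Fin n)) (hσ : σ ∈ SatP (T.erase (a, b))) : fmove a b σ ∈ SatP T := by
  rw [mem_SatP] at hσ ⊢
  have hab' : a ≠ b := ne_of_lt hab
  have hsab : (σ a : ℕ) ≠ (σ b : ℕ) := fun h => hab' (σ.injective (Fin.ext h))
  have han : (σ a : ℕ) < n := (σ a).isLt
  have hbn : (σ b : ℕ) < n := (σ b).isLt
  intro q hq
  rcases eq_or_ne q (a, b) with rfl | hqne
  · simp only [fmove_apply, slotF_val]
    rw [mvNat_self]
    unfold mvNat; split_ifs <;> omega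
  · have hq' : q ∈ T.erase (a, b) := Finset.mem_erase.mpr ⟨hqne, hq⟩
    have hval := hσ q hq'
    obtain ⟨e1, e2, e3⟩ := hne q hq'
    have d1 : (σ q.1 : ℕ) ≠ (σ a : ℕ) := fun h => e1 (σ.injective (Fin.ext h))
    have d2 : (σ q.2 : ℕ) ≠ (σ a : ℕ) := fun h => e2 (σ.injective (Fin.ext h))
    have d3 : (σ q.2 : ℕ) ≠ (σ b : ℕ) := fun h => e3 (σ.injective (Fin.ext h))
    have hq1n : (σ q.1 : ℕ) < n := (σ q.1).isLt
    have hq2n : (σ q.2 : ℕ) < n := (σ q.2).isLt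
    simp only [fmove_apply, slotF_val]
    unfold mvNat; split_ifs <;> omega

lemma fiber_card (T : Finset (Fin n × Fin n)) (a b : Fin n) (hab : a < b)
    (hp0 : (a, b) ∈ T) (hc : Compat T)
    (hne : ∀ q ∈ T.erase (a, b), q.1 ≠ a ∧ q.2 ≠ a ∧ q.2 ≠ b)
    (τ : Equiv.Perm (Fin n)) (hτ : τ ∈ SatP T) :
    ((SatP (T.erase (a, b))).filter (fun σ => fmove a b σ = τ)).card = n - (T.card - 1) := by
  classical
  rw [mem_SatP] at hτ
  have hτab : (τ a : ℕ) = (τ b : ℕ) + 1 := hτ (a, b) hp0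
  have key : ∀ q ∈ T.erase (a, b), ∀ r : Fin n,
      (((gmove a τ r) q.1 : ℕ) = ((gmove a τ r) q.2 : ℕ) + 1) ↔ (r : ℕ) ≠ (badslot a τ q : ℕ) := by
    intro q hq r
    obtain ⟨e1, e2, _⟩ := hne q hq
    exact gmove_sat_iff a b τ r q (hτ q (Finset.mem_of_mem_erase hq))
      (fun h => e1 (τ.injective (Fin.ext h))) (fun h => e2 (τ.injective (Fin.ext h)))
  have himg : (SatP (T.erase (a, b))).filter (fun σ => fmove a b σ = τ) =
      (Finset.univ.filter (fun r : Fin n => ∀ q ∈ T.erase (a, b), r ≠ badslot a τ q)).image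
        (gmove a τ) := by
    ext σ
    simp only [Finset.mem_filter, Finset.mem_image, Finset.mem_univ, true_and]
    constructor
    · rintro ⟨hσ, hfσ⟩
      refine ⟨σ a, ?_, (eq_gmove_of_fmove_eq a b σ τ hfσ).symm⟩
      intro q hq hbad
      have := (key q hq (σ a)).mp (by
        rw [← eq_gmove_of_fmove_eq a b σ τ hfσ]
        exact (mem_SatP.mp hσ) q hq)
      exact this (congrArg Fin.val hbad)
    · rintro ⟨r, hr, rfl⟩
      refine ⟨mem_SatP.mpr ?_, fmove_gmove a b τ hτab r⟩
      intro q hq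
      exact (key q hq r).mpr (fun h => hr q hq (Fin.ext h))
  rw [himg, Finset.card_image_of_injective _ (fun r r' h => by
    rw [← gmove_a a τ r, ← gmove_a a τ r', h])]
  have hset : (Finset.univ.filter (fun r : Fin n => ∀ q ∈ T.erase (a, b), r ≠ badslot a τ q)) =
      Finset.univ \ ((T.erase (a, b)).image (badslot a τ)) := by
    ext r
    simp only [Finset.mem_filter, Finset.mem_univ, true_and, Finset.mem_sdiff, Finset.mem_image]
    constructor
    · intro h
      rintro ⟨q, hq, rfl⟩
      exact h q hq rfl
    · intro h q hq hbad
      exact h ⟨q, hq, hbad.symm⟩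
  rw [hset, Finset.card_sdiff_of_subset (Finset.subset_univ _)]
  have hinj : Set.InjOn (badslot a τ) (T.erase (a, b)) := by
    intro q hq q' hq' heq
    obtain ⟨e1, e2, _⟩ := hne q hq
    obtain ⟨e1', e2', _⟩ := hne q' hq'
    have hqT := Finset.mem_of_mem_erase hq
    have hq'T := Finset.mem_of_mem_erase hq'
    have v1 := hτ q hqT
    have v1' := hτ q' hq'T
    have d2 : (τ q.2 : ℕ) ≠ (τ a : ℕ) := fun h => e2 (τ.injective (Fin.ext h))
    have d2' : (τ q'.2 : ℕ) ≠ (τ a : ℕ) := fun h => e2' (τ.injective (Fin.ext h))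
    have heq' := congrArg Fin.val heq
    unfold badslot at heq'
    split_ifs at heq' with h1 h2 h2
    · exact hc.2 q hqT q' hq'T (τ.injective (Fin.ext heq'))
    · omega
    · omega
    · exact hc.1 q hqT q' hq'T (τ.injective (Fin.ext heq'))
  rw [Finset.card_image_of_injOn hinj, Finset.card_univ, Fintype.card_fin,
    Finset.card_erase_of_mem hp0]

end AOProof

namespace AOProof
variable {n : ℕ}

theorem NN_compat : ∀ T : Finset (Fin n × Fin n),
    (∀ p ∈ T, p.1 < p.2) → Compat T → NN T = Nat.factorial (n - T.card) := by
  intro T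
  induction T using Finset.strongInduction with
  | _ T ih =>
    intro hlt hc
    rcases T.eq_empty_or_nonempty with rfl | hne
    · simp only [NN, SatP, Finset.notMem_empty, false_implies, implies_true,
        Finset.filter_true_of_mem, Finset.card_univ, Finset.card_empty, Nat.sub_zero]
      rw [Fintype.card_perm, Fintype.card_fin]
    · obtain ⟨p0, hp0T, hmin⟩ := T.exists_min_image Prod.fst hne
      obtain ⟨a, b⟩ := p0
      have hab : a < b := hlt (a, b) hp0T
      have hTn : T.card ≤ n := card_le_of_compat hc
      have hTpos : 0 < T.card := Finset.card_pos.mpr hne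
      have hne' : ∀ q ∈ T.erase (a, b), q.1 ≠ a ∧ q.2 ≠ a ∧ q.2 ≠ b := by
        intro q hq
        have hqT := Finset.mem_of_mem_erase hq
        have hqne := Finset.ne_of_mem_erase hq
        refine ⟨fun h => hqne (hc.1 q hqT (a, b) hp0T h), fun h => ?_,
          fun h => hqne (hc.2 q hqT (a, b) hp0T h)⟩
        · have h1 : a ≤ q.1 := hmin q hqT
          have h2 : q.1 < q.2 := hlt q hqT
          rw [h] at h2
          exact absurd (lt_of_le_of_lt h1 h2) (lt_irrefl a)
      have hmaps : ∀ σ ∈ SatP (T.erase (a, b)), fmove a b σ ∈ SatP T :=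
        fun σ hσ => fmove_mem_SatP T a b hab hp0T hne' σ hσ
      have hsum := Finset.card_eq_sum_card_fiberwise hmaps
      have hfib : ∀ τ ∈ SatP T,
          ((SatP (T.erase (a, b))).filter (fun σ => fmove a b σ = τ)).card = n - (T.card - 1) :=
        fun τ hτ => fiber_card T a b hab hp0T hc hne' τ hτ
      rw [Finset.sum_congr rfl hfib, Finset.sum_const, smul_eq_mul] at hsum
      have hIH : NN (T.erase (a, b)) = Nat.factorial (n - (T.card - 1)) := by
        have hsub : T.erase (a, b) ⊂ T := Finset.erase_ssubset hp0T
        have := ih (T.erase (a, b)) hsub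
          (fun p hp => hlt p (Finset.mem_of_mem_erase hp))
          ⟨fun p hp q hq h => hc.1 p (Finset.mem_of_mem_erase hp) q (Finset.mem_of_mem_erase hq) h,
           fun p hp q hq h => hc.2 p (Finset.mem_of_mem_erase hp) q (Finset.mem_of_mem_erase hq) h⟩
        rwa [Finset.card_erase_of_mem hp0T] at this
      have harith : n - (T.card - 1) = (n - T.card) + 1 := by omega
      rw [harith] at hIH
      have : NN (T.erase (a, b)) = (SatP T).card * ((n - T.card) + 1) := by
        rw [NN, hsum, show n - (T.card - 1) = (n - T.card) + 1 from by omega]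
      rw [hIH, Nat.factorial_succ] at this
      have hpos : 0 < (n - T.card) + 1 := Nat.succ_pos _
      rw [NN]
      nlinarith [this, Nat.factorial_pos (n - T.card)]

end AOProof

namespace AOProof
variable {n : ℕ}

def Good (P : Finset (Fin n × Fin n)) : Finset (Equiv.Perm (Fin n)) :=
  Finset.univ.filter fun σ => ∀ p ∈ P, ¬ ((σ p.1 : ℕ) = (σ p.2 : ℕ) + 1)

lemma mem_Good {P : Finset (Fin n × Fin n)} {σ : Equiv.Perm (Fin n)} :
    σ ∈ Good P ↔ ∀ p ∈ P, ¬ ((σ p.1 : ℕ) = (σ p.2 : ℕ) + 1) := by simp [Good]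

theorem good_card_eq (P : Finset (Fin n × Fin n)) :
    ((Good P).card : ℤ) = ∑ T ∈ P.powerset, (-1 : ℤ) ^ T.card * NN T := by
  classical
  have h1 : ((Good P).card : ℤ)
      = ∑ σ : Equiv.Perm (Fin n),
          ∏ p ∈ P, ((if (σ p.1 : ℕ) = (σ p.2 : ℕ) + 1 then (-1 : ℤ) else 0) + 1) := by
    rw [Good, Finset.card_filter]
    push_cast
    apply Finset.sum_congr rfl
    intro σ _
    by_cases h : ∀ p ∈ P, ¬ ((σ p.1 : ℕ) = (σ p.2 : ℕ) + 1)
    · rw [if_pos h, Finset.prod_eq_one]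
      intro p hp; rw [if_neg (h p hp)]; ring
    · rw [if_neg h]
      push_neg at h
      obtain ⟨p, hp, hbad⟩ := h
      rw [Finset.prod_eq_zero hp (by rw [if_pos hbad]; ring)]
  rw [h1]
  have h2 : ∀ σ : Equiv.Perm (Fin n),
      ∏ p ∈ P, ((if (σ p.1 : ℕ) = (σ p.2 : ℕ) + 1 then (-1 : ℤ) else 0) + 1)
      = ∑ T ∈ P.powerset, ∏ p ∈ T, (if (σ p.1 : ℕ) = (σ p.2 : ℕ) + 1 then (-1 : ℤ) else 0) := by
    intro σ
    rw [Finset.prod_add]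
    apply Finset.sum_congr rfl
    intro T _
    rw [Finset.prod_const_one, mul_one]
  simp_rw [h2]
  rw [Finset.sum_comm]
  apply Finset.sum_congr rfl
  intro T hT
  have h3 : ∀ σ : Equiv.Perm (Fin n),
      ∏ p ∈ T, (if (σ p.1 : ℕ) = (σ p.2 : ℕ) + 1 then (-1 : ℤ) else 0)
      = if σ ∈ SatP T then (-1 : ℤ) ^ T.card else 0 := by
    intro σ
    by_cases h : σ ∈ SatP T
    · rw [if_pos h]
      rw [mem_SatP] at h
      rw [Finset.prod_congr rfl (fun p hp => if_pos (h p hp)), Finset.prod_const]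
    · rw [if_neg h, mem_SatP] at *
      push_neg at h
      obtain ⟨p, hp, hbad⟩ := h
      exact Finset.prod_eq_zero hp (if_neg hbad)
  simp_rw [h3]
  rw [Finset.sum_ite_mem, Finset.univ_inter, Finset.sum_const, NN]
  push_cast
  ring

end AOProof

namespace AOProof
variable {n : ℕ}

lemma not_compat_exists {T : Finset (Fin n × Fin n)} (h : ¬ Compat T) :
    ∃ p ∈ T, ∃ q ∈ T, p ≠ q ∧ (p.1 = q.1 ∨ p.2 = q.2) := by
  rw [Compat] at h
  push_neg at h
  by_cases hA : ∀ p ∈ T, ∀ q ∈ T, p.1 = q.1 → p = q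
  · obtain ⟨p, hp, q, hq, heq, hne⟩ := h hA
    exact ⟨p, hp, q, hq, hne, Or.inr heq⟩
  · push_neg at hA
    obtain ⟨p, hp, q, hq, heq, hne⟩ := hA
    exact ⟨p, hp, q, hq, hne, Or.inl heq⟩

lemma not_compat_erase {T : Finset (Fin n × Fin n)} (h : ¬ Compat T) (h3 : 3 ≤ T.card) :
    ∃ r ∈ T, ¬ Compat (T.erase r) := by
  classical
  obtain ⟨p, hp, q, hq, hne, hor⟩ := not_compat_exists h
  have hq' : q ∈ T.erase p := Finset.mem_erase.mpr ⟨hne.symm, hq⟩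
  have hcard : 0 < ((T.erase p).erase q).card := by
    rw [Finset.card_erase_of_mem hq', Finset.card_erase_of_mem hp]
    omega
  obtain ⟨r, hr⟩ := Finset.card_pos.mp hcard
  have hrq : r ≠ q := Finset.ne_of_mem_erase hr
  have hrp : r ≠ p := Finset.ne_of_mem_erase (Finset.mem_of_mem_erase hr)
  have hrT : r ∈ T := Finset.mem_of_mem_erase (Finset.mem_of_mem_erase hr)
  refine ⟨r, hrT, fun hcc => ?_⟩
  have hp' : p ∈ T.erase r := Finset.mem_erase.mpr ⟨fun h => hrp h.symm, hp⟩
  have hq'' : q ∈ T.erase r := Finset.mem_erase.mpr ⟨fun h => hrq h.symm, hq⟩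
  rcases hor with h1 | h2
  · exact hne (hcc.1 p hp' q hq'' h1)
  · exact hne (hcc.2 p hp' q hq'' h2)

lemma d_succ_le (P : Finset (Fin n × Fin n)) (i : ℕ) (h2 : 2 ≤ i) :
    ((P.powersetCard (i + 1)).filter (fun T => ¬ Compat T)).card
      ≤ (P.card - i) * ((P.powersetCard i).filter (fun T => ¬ Compat T)).card := by
  classical
  set s := (P.powersetCard (i + 1)).filter (fun T => ¬ Compat T) with hs
  set t := (P.powersetCard i).filter (fun T => ¬ Compat T) with ht
  have hwit : ∀ T ∈ s, ∃ r ∈ T, ¬ Compat (T.erase r) := by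
    intro T hT
    rw [hs, Finset.mem_filter, Finset.mem_powersetCard] at hT
    exact not_compat_erase hT.2 (by omega)
  let f : Finset (Fin n × Fin n) → Finset (Fin n × Fin n) := fun T =>
    if h : ∃ r ∈ T, ¬ Compat (T.erase r) then T.erase h.choose else ∅
  have hmaps : ∀ T ∈ s, f T ∈ t := by
    intro T hT
    have hex := hwit T hT
    have hspec := hex.choose_spec
    rw [hs, Finset.mem_filter, Finset.mem_powersetCard] at hT
    show (if h : ∃ r ∈ T, ¬ Compat (T.erase r) then T.erase h.choose else ∅) ∈ t
    rw [dif_pos hex, ht, Finset.mem_filter, Finset.mem_powersetCard]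
    refine ⟨⟨(Finset.erase_subset _ _).trans hT.1.1, ?_⟩, hspec.2⟩
    rw [Finset.card_erase_of_mem hspec.1, hT.1.2]
    omega
  have hfiber : ∀ B ∈ t, (s.filter (fun T => f T = B)).card ≤ P.card - i := by
    intro B hB
    rw [ht, Finset.mem_filter, Finset.mem_powersetCard] at hB
    have hsub : (s.filter (fun T => f T = B)) ⊆ (P \ B).image (fun x => insert x B) := by
      intro T hT
      rw [Finset.mem_filter] at hT
      obtain ⟨hTs, hfT⟩ := hT
      have hex := hwit T hTs
      have hspec := hex.choose_spec
      have hfT' : T.erase hex.choose = B := by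
        have : f T = T.erase hex.choose := dif_pos hex
        rw [← this, hfT]
      rw [Finset.mem_image]
      refine ⟨hex.choose, ?_, ?_⟩
      · rw [Finset.mem_sdiff]
        have hTP : T ⊆ P := by
          rw [hs, Finset.mem_filter, Finset.mem_powersetCard] at hTs
          exact hTs.1.1
        refine ⟨hTP hspec.1, ?_⟩
        rw [← hfT']
        exact Finset.notMem_erase _ _
      · rw [← hfT', Finset.insert_erase hspec.1]
    calc (s.filter (fun T => f T = B)).card ≤ ((P \ B).image (fun x => insert x B)).card :=
          Finset.card_le_card hsub
      _ ≤ (P \ B).card := Finset.card_image_le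
      _ = P.card - i := by rw [Finset.card_sdiff_of_subset hB.1.1, hB.1.2]
  calc s.card ≤ (P.card - i) * t.card :=
        Finset.card_le_mul_card_image_of_maps_to hmaps _ hfiber
    _ = _ := by rw [ht]

end AOProof

namespace AOProof
variable {n : ℕ}

lemma sum_range_two_mul (m : ℕ) (h : ℕ → ℤ) :
    ∑ i ∈ Finset.range (2 * m), h i = ∑ j ∈ Finset.range m, (h (2 * j) + h (2 * j + 1)) := by
  induction m with
  | zero => simp
  | succ m ih =>
      rw [Finset.sum_range_succ, ← ih, show 2 * (m + 1) = (2 * m) + 1 + 1 by ring,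
        Finset.sum_range_succ, Finset.sum_range_succ, add_assoc]

lemma compat_singleton (T : Finset (Fin n × Fin n)) (h : T.card = 1) : Compat T := by
  obtain ⟨x, rfl⟩ := Finset.card_eq_one.mp h
  constructor <;> (intro p hp q hq _; rw [Finset.mem_singleton] at hp hq; rw [hp, hq])

lemma good_level (R : Finset (Fin n × Fin n)) (hR : ∀ p ∈ R, p.1 < p.2) :
    ((Good R).card : ℤ) = ∑ i ∈ Finset.range (R.card + 1),
      (-1 : ℤ) ^ i * (((R.powersetCard i).filter Compat).card : ℤ)
        * (Nat.factorial (n - i) : ℤ) := by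
  classical
  rw [good_card_eq, Finset.powerset_card_disjiUnion]
  refine (Finset.sum_disjiUnion _ _ _).trans ?_
  apply Finset.sum_congr rfl
  intro i _
  rw [← Finset.sum_filter_add_sum_filter_not (R.powersetCard i) Compat]
  have hz : ∑ T ∈ (R.powersetCard i).filter (fun T => ¬ Compat T),
      (-1 : ℤ) ^ T.card * NN T = 0 :=
    Finset.sum_eq_zero (fun T hT => by
      rw [Finset.mem_filter] at hT
      rw [NN_of_not_compat hT.2]; simp)
  have heach : ∀ T ∈ (R.powersetCard i).filter Compat,
      ((-1 : ℤ) ^ T.card * NN T) = (-1 : ℤ) ^ i * (Nat.factorial (n - i) : ℤ) := by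
    intro T hT
    rw [Finset.mem_filter, Finset.mem_powersetCard] at hT
    rw [NN_compat T (fun p hp => hR p (hT.1.1 hp)) hT.2, hT.1.2]
  rw [hz, add_zero, Finset.sum_congr rfl heach, Finset.sum_const, nsmul_eq_mul]
  ring

theorem good_card_le (P Q : Finset (Fin n × Fin n))
    (hP : ∀ p ∈ P, p.1 < p.2) (hQ : ∀ p ∈ Q, p.1 < p.2)
    (hcard : P.card = Q.card)
    (hQc : ∀ T ⊆ Q, Compat T) :
    (Good P).card ≤ (Good Q).card := by
  classical
  set k := Q.card with hk
  have hkn : k ≤ n := card_le_of_compat (hQc Q (subset_refl Q))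
  set dP : ℕ → ℕ := fun i => ((P.powersetCard i).filter (fun T => ¬ Compat T)).card with hdP
  have hQall : ∀ i, ((Q.powersetCard i).filter Compat).card = Nat.choose k i := by
    intro i
    rw [Finset.filter_true_of_mem (fun T hT => hQc T (Finset.mem_powersetCard.mp hT).1),
      Finset.card_powersetCard]
  have hPsplit : ∀ i, (((P.powersetCard i).filter Compat).card : ℤ)
      = (Nat.choose k i : ℤ) - (dP i : ℤ) := by
    intro i
    have := Finset.card_filter_add_card_filter_not
      (s := P.powersetCard i) (p := Compat)
    rw [Finset.card_powersetCard, hcard] at this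
    rw [hdP]
    push_cast
    omega
  have hdP_zero : ∀ i, k < i → dP i = 0 := by
    intro i hi
    have he : P.powersetCard i = ∅ := Finset.powersetCard_eq_empty.mpr (by omega)
    simp only [hdP, he]; simp
  have hdP1 : dP 1 = 0 := by
    rw [hdP, Finset.card_eq_zero, Finset.filter_eq_empty_iff]
    intro T hT
    rw [Finset.mem_powersetCard] at hT
    simp only [not_not]
    exact compat_singleton T hT.2
  have hstep : ∀ j : ℕ, dP (2 * j + 1) * Nat.factorial (n - (2 * j + 1))
      ≤ dP (2 * j) * Nat.factorial (n - 2 * j) := by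
    intro j
    rcases Nat.lt_or_ge k (2 * j + 1) with hbig | hle
    · rw [hdP_zero _ hbig]; simp
    · rcases Nat.eq_zero_or_pos j with rfl | hj
      · simp only [Nat.mul_zero, Nat.zero_add, hdP1, Nat.zero_mul]; exact Nat.zero_le _
      · have h2 : 2 ≤ 2 * j := by omega
        have hd := d_succ_le P (2 * j) h2
        rw [hcard] at hd
        have hfac : Nat.factorial (n - 2 * j)
            = (n - 2 * j) * Nat.factorial (n - (2 * j + 1)) := by
          have h1 : n - 2 * j = (n - (2 * j + 1)) + 1 := by omega
          rw [h1, Nat.factorial_succ]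
        calc dP (2 * j + 1) * Nat.factorial (n - (2 * j + 1))
            ≤ ((k - 2 * j) * dP (2 * j)) * Nat.factorial (n - (2 * j + 1)) :=
              Nat.mul_le_mul_right _ hd
          _ ≤ ((n - 2 * j) * dP (2 * j)) * Nat.factorial (n - (2 * j + 1)) :=
              Nat.mul_le_mul_right _ (Nat.mul_le_mul_right _ (by omega))
          _ = dP (2 * j) * Nat.factorial (n - 2 * j) := by rw [hfac]; ring
  suffices h : ((Good P).card : ℤ) ≤ ((Good Q).card : ℤ) by exact_mod_cast h
  rw [good_level P hP, good_level Q hQ, hcard]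
  rw [← sub_nonneg, ← Finset.sum_sub_distrib]
  have hterm : ∀ i ∈ Finset.range (k + 1),
      ((-1 : ℤ) ^ i * (((Q.powersetCard i).filter Compat).card : ℤ)
          * (Nat.factorial (n - i) : ℤ)
        - (-1 : ℤ) ^ i * (((P.powersetCard i).filter Compat).card : ℤ)
          * (Nat.factorial (n - i) : ℤ))
      = (-1 : ℤ) ^ i * (dP i : ℤ) * (Nat.factorial (n - i) : ℤ) := by
    intro i _
    rw [hQall i, hPsplit i]
    ring
  rw [Finset.sum_congr rfl hterm]
  have hext : ∑ i ∈ Finset.range (k + 1),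
      (-1 : ℤ) ^ i * (dP i : ℤ) * (Nat.factorial (n - i) : ℤ)
      = ∑ i ∈ Finset.range (2 * (k + 1)),
        (-1 : ℤ) ^ i * (dP i : ℤ) * (Nat.factorial (n - i) : ℤ) := by
    apply Finset.sum_subset
    · intro i hi
      rw [Finset.mem_range] at hi ⊢
      omega
    · intro i _ hi
      rw [Finset.mem_range, not_lt] at hi
      rw [hdP_zero i (by omega)]
      simp
  rw [hext, sum_range_two_mul]
  apply Finset.sum_nonneg
  intro j _
  have hsign1 : (-1 : ℤ) ^ (2 * j) = 1 := by
    rw [pow_mul]; norm_num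
  have hsign2 : (-1 : ℤ) ^ (2 * j + 1) = -1 := by
    rw [pow_succ, hsign1]; ring
  rw [hsign1, hsign2]
  have := hstep j
  have hcast : ((dP (2 * j + 1) * Nat.factorial (n - (2 * j + 1)) : ℕ) : ℤ)
      ≤ ((dP (2 * j) * Nat.factorial (n - 2 * j) : ℕ) : ℤ) := by exact_mod_cast this
  push_cast at hcast
  linarith

end AOProof

namespace AOProof
variable {n : ℕ}

def Phi (G : SimpleGraph (Fin n)) (σ : Equiv.Perm (Fin n)) : Fin n → Fin n → Prop :=
  fun u v => G.Adj u v ∧ σ u < σ v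

lemma transGen_phi_lt {G : SimpleGraph (Fin n)} {σ : Equiv.Perm (Fin n)} {u v : Fin n}
    (h : Relation.TransGen (Phi G σ) u v) : σ u < σ v := by
  induction h with
  | single h => exact h.2
  | tail _ h2 ih => exact lt_trans ih h2.2

lemma phi_isOrientation (G : SimpleGraph (Fin n)) (σ : Equiv.Perm (Fin n)) :
    IsOrientation G (Phi G σ) := by
  constructor
  · exact fun u v h => h.1
  · intro u v hadj
    constructor
    · rintro ⟨-, hlt⟩ ⟨-, hlt'⟩
      exact absurd hlt' (not_lt.mpr (le_of_lt hlt))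
    · intro h
      refine ⟨hadj, ?_⟩
      rcases lt_trichotomy (σ u) (σ v) with h1 | h1 | h1
      · exact h1
      · exact absurd (σ.injective h1) hadj.ne
      · exact absurd ⟨hadj.symm, h1⟩ h
lemma phi_acyclic (G : SimpleGraph (Fin n)) (σ : Equiv.Perm (Fin n)) :
    IsAcyclicRel (Phi G σ) :=
  fun u h => lt_irrefl _ (transGen_phi_lt h)

lemma exists_perm_of_acyclic (o : Fin n → Fin n → Prop) (ho : IsAcyclicRel o) :
    ∃ σ : Equiv.Perm (Fin n), ∀ u v, o u v → σ u < σ v := by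
  classical
  set r := Relation.TransGen o with hr
  set le : Fin n → Fin n → Prop := fun u v => u = v ∨ r u v with hle
  haveI hpo : IsPartialOrder (Fin n) le := by
    refine { refl := fun a => Or.inl rfl, trans := ?_, antisymm := ?_ }
    · rintro a b c (rfl | hab) (rfl | hbc)
      · exact Or.inl rfl
      · exact Or.inr hbc
      · exact Or.inr hab
      · exact Or.inr (hab.trans hbc)
    · rintro a b (rfl | hab) (h | hba)
      · rfl
      · rfl
      · exact h.symm
      · exact absurd (hab.trans hba) (ho a)
  obtain ⟨s, hs, hles⟩ := extend_partialOrder le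
  haveI h1 : IsTrans (Fin n) s := hs.toIsPartialOrder.toIsPreorder.toIsTrans
  haveI h2 : Std.Antisymm s := by haveI := hs; infer_instance
  haveI h3 : Std.Total s := by haveI := hs; infer_instance
  set l := Finset.univ.sort s with hl
  have hlen : l.length = n := by
    rw [hl, Finset.length_sort, Finset.card_univ, Fintype.card_fin]
  have hmem : ∀ x : Fin n, x ∈ l := fun x => (Finset.mem_sort s).mpr (Finset.mem_univ x)
  set f : Fin n → Fin n := fun x => ⟨l.idxOf x, by
    have := List.idxOf_lt_length_iff.mpr (hmem x); omega⟩ with hf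
  have hfinj : Function.Injective f := by
    intro x y hxy
    exact (List.idxOf_inj (hmem x)).mp (congrArg Fin.val hxy)
  have hmono : ∀ u v : Fin n, u ≠ v → s u v → (l.idxOf u) < l.idxOf v := by
    intro u v hne hsuv
    rcases lt_trichotomy (l.idxOf u) (l.idxOf v) with h | h | h
    · exact h
    · exact absurd ((List.idxOf_inj (hmem u)).mp h) hne
    · exfalso
      have hlt : (⟨l.idxOf v, List.idxOf_lt_length_iff.mpr (hmem v)⟩ : Fin l.length)
          < ⟨l.idxOf u, List.idxOf_lt_length_iff.mpr (hmem u)⟩ := h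
      have := (Finset.pairwise_sort Finset.univ s).rel_get_of_lt hlt
      rw [List.idxOf_get, List.idxOf_get] at this
      exact hne (antisymm hsuv this)
  refine ⟨Equiv.ofBijective f ((Finite.injective_iff_bijective).mp hfinj), ?_⟩
  intro u v houv
  have hne : u ≠ v := by
    rintro rfl
    exact ho u (Relation.TransGen.single houv)
  have : s u v := hles u v (Or.inr (Relation.TransGen.single houv))
  exact hmono u v hne this

lemma phi_range (G : SimpleGraph (Fin n)) :
    {o : Fin n → Fin n → Prop | IsOrientation G o ∧ IsAcyclicRel o} = Set.range (Phi G) := by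
  ext o
  constructor
  · rintro ⟨h1, h2⟩
    obtain ⟨σ, hσ⟩ := exists_perm_of_acyclic o h2
    refine ⟨σ, ?_⟩
    funext u v
    apply propext
    constructor
    · rintro ⟨hadj, hlt⟩
      by_contra h
      have : o v u := by
        have := h1.2 u v hadj
        tauto
      exact absurd (hσ v u this) (not_lt.mpr (le_of_lt hlt))
    · intro h
      exact ⟨h1.1 u v h, hσ u v h⟩
  · rintro ⟨σ, rfl⟩
    exact ⟨phi_isOrientation G σ, phi_acyclic G σ⟩

end AOProof


namespace AOProof
variable {n : ℕ}

noncomputable def pairsOf (F : SimpleGraph (Fin n)) : Finset (Fin n × Fin n) :=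
  (Set.toFinite {p : Fin n × Fin n | F.Adj p.1 p.2 ∧ p.1 < p.2}).toFinset

lemma mem_pairsOf {F : SimpleGraph (Fin n)} {p : Fin n × Fin n} :
    p ∈ pairsOf F ↔ F.Adj p.1 p.2 ∧ p.1 < p.2 := by
  rw [pairsOf, Set.Finite.mem_toFinset, Set.mem_setOf_eq]

lemma pairsOf_lt {F : SimpleGraph (Fin n)} : ∀ p ∈ pairsOf F, p.1 < p.2 :=
  fun _ hp => (mem_pairsOf.mp hp).2

/-- The number of inversions of a permutation. -/
def invCount (σ : Equiv.Perm (Fin n)) : ℕ :=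
  (Finset.univ.filter (fun q : Fin n × Fin n => q.1 < q.2 ∧ σ q.2 < σ q.1)).card

/-- A representative of any acyclic orientation avoiding all complement-pair descents. -/
lemma exists_good_rep (G : SimpleGraph (Fin n)) (o : Fin n → Fin n → Prop)
    (ho : o ∈ Set.range (Phi G)) :
    ∃ σ : Equiv.Perm (Fin n), Phi G σ = o ∧ σ ∈ Good (pairsOf Gᶜ) := by
  classical
  set fib := Finset.univ.filter (fun σ : Equiv.Perm (Fin n) => Phi G σ = o) with hfib
  obtain ⟨σ1, hσ1⟩ := ho
  have hne : fib.Nonempty := ⟨σ1, by rw [hfib, Finset.mem_filter]; exact ⟨Finset.mem_univ _, hσ1⟩⟩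
  obtain ⟨σ0, hσ0, hmin⟩ := fib.exists_min_image invCount hne
  refine ⟨σ0, (Finset.mem_filter.mp hσ0).2, ?_⟩
  rw [mem_Good]
  by_contra hbad
  push_neg at hbad
  obtain ⟨p, hp, hviol⟩ := hbad
  obtain ⟨hadj, hlt⟩ := mem_pairsOf.mp hp
  set a := p.1 with hap
  set b := p.2 with hbp
  have hnadj : ¬ G.Adj a b := fun h => ((SimpleGraph.compl_adj G a b).mp hadj).2 h
  have hne_ab : a ≠ b := ne_of_lt hlt
  set σ' := (Equiv.swap a b).trans σ0 with hσ'
  have hs'a : σ' a = σ0 b := by rw [hσ']; simp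
  have hs'b : σ' b = σ0 a := by rw [hσ']; simp
  have hs'x : ∀ x, x ≠ a → x ≠ b → σ' x = σ0 x := by
    intro x h1 h2
    rw [hσ']; simp [Equiv.swap_apply_of_ne_of_ne h1 h2]
  have hval : ∀ x, x ≠ a → x ≠ b →
      ((σ0 x : ℕ) ≠ (σ0 a : ℕ) ∧ (σ0 x : ℕ) ≠ (σ0 b : ℕ)) := by
    intro x h1 h2
    exact ⟨fun h => h1 (σ0.injective (Fin.ext h)), fun h => h2 (σ0.injective (Fin.ext h))⟩
  -- comparisons unchanged except between a and b
  have hcmp : ∀ u v : Fin n, ¬(u = a ∧ v = b) → ¬(u = b ∧ v = a) →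
      (σ' u < σ' v ↔ σ0 u < σ0 v) := by
    intro u v h1 h2
    have hbval : (σ0 a : ℕ) = (σ0 b : ℕ) + 1 := hviol
    by_cases hua : u = a
    · subst hua
      by_cases hvb : v = b
      · exact absurd ⟨rfl, hvb⟩ h1
      · by_cases hva : v = a
        · subst hva
          constructor <;> (intro h; exact absurd h (lt_irrefl _))
        · rw [hs'a, hs'x v hva hvb]
          have := hval v hva hvb
          simp only [Fin.lt_def]; omega
    · by_cases hub : u = b
      · subst hub
        by_cases hva : v = a
        · exact absurd ⟨rfl, hva⟩ h2
        · by_cases hvb : v = b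
          · subst hvb
            constructor <;> (intro h; exact absurd h (lt_irrefl _))
          · rw [hs'b, hs'x v hva hvb]
            have := hval v hva hvb
            simp only [Fin.lt_def]; omega
      · by_cases hva : v = a
        · subst hva
          rw [hs'a, hs'x u hua hub]
          have := hval u hua hub
          simp only [Fin.lt_def]; omega
        · by_cases hvb : v = b
          · subst hvb
            rw [hs'b, hs'x u hua hub]
            have := hval u hua hub
            simp only [Fin.lt_def]; omega
          · rw [hs'x u hua hub, hs'x v hva hvb]
  have hbval : (σ0 a : ℕ) = (σ0 b : ℕ) + 1 := hviol
  have hphi : Phi G σ' = Phi G σ0 := by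
    funext u v
    apply propext
    have hx : ∀ (huv : G.Adj u v), (σ' u < σ' v ↔ σ0 u < σ0 v) := by
      intro huv
      apply hcmp
      · rintro ⟨rfl, rfl⟩; exact hnadj huv
      · rintro ⟨rfl, rfl⟩; exact hnadj huv.symm
    constructor
    · rintro ⟨huv, h⟩; exact ⟨huv, (hx huv).mp h⟩
    · rintro ⟨huv, h⟩; exact ⟨huv, (hx huv).mpr h⟩
  have hσ'fib : σ' ∈ fib := by
    rw [hfib, Finset.mem_filter]
    exact ⟨Finset.mem_univ _, hphi.trans (Finset.mem_filter.mp hσ0).2⟩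
  -- the swap strictly decreases the inversion count
  have hinv : invCount σ' < invCount σ0 := by
    apply Finset.card_lt_card
    rw [Finset.ssubset_iff_of_subset]
    · refine ⟨(a, b), ?_, ?_⟩
      · simp only [Finset.mem_filter, Finset.mem_univ, true_and]
        refine ⟨hlt, ?_⟩
        simp only [Fin.lt_def]; omega
      · simp only [Finset.mem_filter, Finset.mem_univ, true_and, not_and]
        intro _
        rw [hs'a, hs'b]
        simp only [Fin.lt_def, not_lt]; omega
    · intro q hq
      simp only [Finset.mem_filter, Finset.mem_univ, true_and] at hq ⊢
      obtain ⟨hq1, hq2⟩ := hq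
      refine ⟨hq1, ?_⟩
      have hne1 : ¬(q.2 = a ∧ q.1 = b) := by
        rintro ⟨h1, h2⟩
        rw [h1, h2] at hq1
        exact absurd hlt (not_lt.mpr (le_of_lt hq1))
      by_cases hqab : q.2 = b ∧ q.1 = a
      · obtain ⟨h1, h2⟩ := hqab
        rw [h1, h2] at hq2
        rw [Fin.lt_def] at hq2
        omega
      · exact (hcmp q.2 q.1 hne1 hqab).mp hq2
  exact absurd hinv (not_lt.mpr (hmin σ' hσ'fib))

end AOProof

namespace AOProof
variable {n : ℕ}

lemma good_unique (H : SimpleGraph (Fin n))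
    (hmatch : ∀ v u w : Fin n, Hᶜ.Adj v u → Hᶜ.Adj v w → u = w)
    (σ τ : Equiv.Perm (Fin n)) (hσ : σ ∈ Good (pairsOf Hᶜ)) (hτ : τ ∈ Good (pairsOf Hᶜ))
    (heq : Phi H σ = Phi H τ) : σ = τ := by
  classical
  by_contra hne
  have hex : ∃ j : Fin n, σ.symm j ≠ τ.symm j := by
    by_contra h
    push_neg at h
    exact hne (by simpa using congrArg Equiv.symm (Equiv.ext h))
  set S := Finset.univ.filter (fun j : Fin n => σ.symm j ≠ τ.symm j) with hS
  have hSne : S.Nonempty := by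
    obtain ⟨j, hj⟩ := hex
    exact ⟨j, by rw [hS, Finset.mem_filter]; exact ⟨Finset.mem_univ _, hj⟩⟩
  obtain ⟨j, hjS, hjmin⟩ := S.exists_min_image (fun j => (j : ℕ)) hSne
  have hj : σ.symm j ≠ τ.symm j := (Finset.mem_filter.mp hjS).2
  have hpre : ∀ i : Fin n, (i : ℕ) < (j : ℕ) → σ.symm i = τ.symm i := by
    intro i hi
    by_contra h
    have hiS : i ∈ S := by rw [hS, Finset.mem_filter]; exact ⟨Finset.mem_univ _, h⟩
    exact absurd (hjmin i hiS) (by omega)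
  set a := σ.symm j with hadef
  set b := τ.symm j with hbdef
  have hab : a ≠ b := hj
  have hσa : σ a = j := by rw [hadef]; simp
  have hτb : τ b = j := by rw [hbdef]; simp
  have hagree : ∀ u v, H.Adj u v → (σ u < σ v ↔ τ u < τ v) := by
    intro u v huv
    have h1 : Phi H σ u v ↔ Phi H τ u v := by rw [heq]
    simp only [Phi] at h1
    constructor
    · intro h; exact (h1.mp ⟨huv, h⟩).2
    · intro h; exact (h1.mpr ⟨huv, h⟩).2
  -- positions of a in τ and b in σ are after j
  have hτa : (j : ℕ) < (τ a : ℕ) := by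
    rcases lt_trichotomy ((τ a : ℕ)) (j : ℕ) with h | h | h
    · exfalso
      have h1 : σ.symm (τ a) = τ.symm (τ a) := hpre (τ a) h
      rw [Equiv.symm_apply_apply] at h1
      have h2 := congrArg σ h1
      rw [Equiv.apply_symm_apply] at h2
      rw [hσa] at h2
      have := congrArg Fin.val h2
      omega
    · exfalso
      have h2 : τ.symm (τ a) = τ.symm j := congrArg τ.symm (Fin.ext h)
      rw [Equiv.symm_apply_apply] at h2
      exact hab (h2.trans hbdef.symm)
    · exact h
  have hσb : (j : ℕ) < (σ b : ℕ) := by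
    rcases lt_trichotomy ((σ b : ℕ)) (j : ℕ) with h | h | h
    · exfalso
      have h1 : σ.symm (σ b) = τ.symm (σ b) := hpre (σ b) h
      rw [Equiv.symm_apply_apply] at h1
      have h2 := congrArg τ h1.symm
      rw [Equiv.apply_symm_apply] at h2
      rw [hτb] at h2
      have := congrArg Fin.val h2
      omega
    · exfalso
      have h2 : σ.symm (σ b) = σ.symm j := congrArg σ.symm (Fin.ext h)
      rw [Equiv.symm_apply_apply] at h2
      exact hab (h2.trans hadef.symm).symm
    · exact h
  -- a and b are complement-adjacent
  have hHab : Hᶜ.Adj a b := by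
    rw [SimpleGraph.compl_adj]
    refine ⟨hab, fun hadj => ?_⟩
    have h1 : σ a < σ b := by rw [hσa]; exact Fin.lt_def.mpr hσb
    have h2 := (hagree a b hadj).mp h1
    rw [hτb] at h2
    rw [Fin.lt_def] at h2
    omega
  -- no element sits strictly between j and τ a in τ
  have hgapτ : (τ a : ℕ) = (j : ℕ) + 1 := by
    by_contra h
    have hx : ∃ x : Fin n, (τ x : ℕ) = (j : ℕ) + 1 := by
      refine ⟨τ.symm ⟨(j : ℕ) + 1, by omega⟩, ?_⟩
      simp
    obtain ⟨x, hx⟩ := hx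
    have hxa : x ≠ a := fun hh => by rw [hh] at hx; omega
    have hxb : x ≠ b := fun hh => by rw [hh, hτb] at hx; omega
    have hHax : H.Adj a x := by
      have : ¬ Hᶜ.Adj a x := fun hc => hxb (hmatch a b x hHab hc).symm
      rw [SimpleGraph.compl_adj] at this
      push_neg at this
      exact this (fun hh => hxa hh.symm)
    have h1 : τ x < τ a := by rw [Fin.lt_def]; omega
    have h2 : σ x < σ a := (hagree x a hHax.symm).mpr h1
    rw [hσa, Fin.lt_def] at h2
    have h3 : σ.symm (σ x) = τ.symm (σ x) := hpre (σ x) h2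
    rw [Equiv.symm_apply_apply] at h3
    have h4 := congrArg τ h3
    rw [Equiv.apply_symm_apply] at h4
    have h5 := congrArg Fin.val h4
    omega
  have hgapσ : (σ b : ℕ) = (j : ℕ) + 1 := by
    by_contra h
    have hx : ∃ x : Fin n, (σ x : ℕ) = (j : ℕ) + 1 := by
      refine ⟨σ.symm ⟨(j : ℕ) + 1, by omega⟩, ?_⟩
      simp
    obtain ⟨x, hx⟩ := hx
    have hxb : x ≠ b := fun hh => by rw [hh] at hx; omega
    have hxa : x ≠ a := fun hh => by rw [hh, hσa] at hx; omega
    have hHbx : H.Adj b x := by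
      have : ¬ Hᶜ.Adj b x := fun hc => hxa (hmatch b a x hHab.symm hc).symm
      rw [SimpleGraph.compl_adj] at this
      push_neg at this
      exact this (fun hh => hxb hh.symm)
    have h1 : σ x < σ b := by rw [Fin.lt_def]; omega
    have h2 : τ x < τ b := (hagree x b hHbx.symm).mp h1
    rw [hτb, Fin.lt_def] at h2
    have h3 : σ.symm (τ x) = τ.symm (τ x) := hpre (τ x) h2
    rw [Equiv.symm_apply_apply] at h3
    have h4 := congrArg σ h3
    rw [Equiv.apply_symm_apply] at h4
    have h5 := congrArg Fin.val h4
    omega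
  -- both orders of a, b lead to a violated Good constraint
  rcases lt_trichotomy a b with h | h | h
  · have hmem : (a, b) ∈ pairsOf Hᶜ := mem_pairsOf.mpr ⟨hHab, h⟩
    have := (mem_Good.mp hτ) (a, b) hmem
    apply this
    rw [hτb]
    exact hgapτ
  · exact hab h
  · have hmem : (b, a) ∈ pairsOf Hᶜ := mem_pairsOf.mpr ⟨hHab.symm, h⟩
    have := (mem_Good.mp hσ) (b, a) hmem
    apply this
    rw [hσa]
    exact hgapσ

end AOProof

namespace AOProof
variable {n : ℕ}

lemma phi_range' (G : SimpleGraph (Fin n)) (o : Fin n → Fin n → Prop) :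
    (IsOrientation G o ∧ IsAcyclicRel o) ↔ o ∈ Set.range (Phi G) :=
  Set.ext_iff.mp (phi_range G) o

lemma aoCount_eq_card_range (G : SimpleGraph (Fin n)) :
    aoCount G = Nat.card (Set.range (Phi G)) := by
  rw [aoCount]
  exact Nat.card_congr (Equiv.subtypeEquivRight (phi_range' G))

noncomputable def goodRep (G : SimpleGraph (Fin n)) (o : Set.range (Phi G)) :
    {σ : Equiv.Perm (Fin n) // σ ∈ Good (pairsOf Gᶜ)} :=
  ⟨(exists_good_rep G o.1 o.2).choose, (exists_good_rep G o.1 o.2).choose_spec.2⟩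

lemma goodRep_phi (G : SimpleGraph (Fin n)) (o : Set.range (Phi G)) :
    Phi G (goodRep G o).1 = o.1 :=
  (exists_good_rep G o.1 o.2).choose_spec.1

lemma goodRep_injective (G : SimpleGraph (Fin n)) : Function.Injective (goodRep G) := by
  intro o1 o2 h
  apply Subtype.ext
  rw [← goodRep_phi G o1, ← goodRep_phi G o2, congrArg Subtype.val h]

lemma aoCount_le_good (G : SimpleGraph (Fin n)) :
    aoCount G ≤ (Good (pairsOf Gᶜ)).card := by
  rw [aoCount_eq_card_range, ← Nat.card_eq_finsetCard]
  exact Nat.card_le_card_of_injective (goodRep G) (goodRep_injective G)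

lemma aoCount_eq_good (H : SimpleGraph (Fin n))
    (hmatch : ∀ v u w : Fin n, Hᶜ.Adj v u → Hᶜ.Adj v w → u = w) :
    aoCount H = (Good (pairsOf Hᶜ)).card := by
  rw [aoCount_eq_card_range, ← Nat.card_eq_finsetCard]
  apply Nat.card_eq_of_bijective (goodRep H)
  constructor
  · exact goodRep_injective H
  · rintro ⟨σ, hσ⟩
    have hmem : Phi H σ ∈ Set.range (Phi H) := ⟨σ, rfl⟩
    refine ⟨⟨Phi H σ, hmem⟩, ?_⟩
    apply Subtype.ext
    exact good_unique H hmatch _ σ (goodRep H ⟨Phi H σ, hmem⟩).2 hσ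
      (goodRep_phi H ⟨Phi H σ, hmem⟩)

lemma pairs_card (F : SimpleGraph (Fin n)) : (pairsOf F).card = F.edgeSet.ncard := by
  classical
  have himg : (((pairsOf F).image (fun p : Fin n × Fin n => s(p.1, p.2))) : Set (Sym2 (Fin n)))
      = F.edgeSet := by
    ext e
    induction e with
    | _ u v =>
      simp only [Finset.coe_image, Set.mem_image, Finset.mem_coe, SimpleGraph.mem_edgeSet]
      constructor
      · rintro ⟨p, hp, hpe⟩
        obtain ⟨hadj, _⟩ := mem_pairsOf.mp hp
        rcases Sym2.eq_iff.mp hpe with ⟨h1, h2⟩ | ⟨h1, h2⟩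
        · rw [← h1, ← h2]; exact hadj
        · rw [← h1, ← h2]; exact hadj.symm
      · intro hadj
        rcases lt_trichotomy u v with h | h | h
        · exact ⟨(u, v), mem_pairsOf.mpr ⟨hadj, h⟩, rfl⟩
        · exact absurd (h ▸ hadj) (SimpleGraph.irrefl F)
        · exact ⟨(v, u), mem_pairsOf.mpr ⟨hadj.symm, h⟩, Sym2.eq_swap⟩
  have hinj : Set.InjOn (fun p : Fin n × Fin n => s(p.1, p.2)) (pairsOf F) := by
    intro p hp q hq hpq
    obtain ⟨-, h1⟩ := mem_pairsOf.mp hp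
    obtain ⟨-, h2⟩ := mem_pairsOf.mp hq
    rcases Sym2.eq_iff.mp hpq with ⟨ha, hb⟩ | ⟨ha, hb⟩
    · exact Prod.ext ha hb
    · exfalso
      have e1 := congrArg Fin.val ha
      have e2 := congrArg Fin.val hb
      rw [Fin.lt_def] at h1 h2
      omega
  rw [← himg, Set.ncard_coe_finset, Finset.card_image_of_injOn hinj]

lemma pairsOf_compl (K : SimpleGraph (Fin n)) :
    pairsOf Kᶜ = pairsOf (⊤ : SimpleGraph (Fin n)) \ pairsOf K := by
  ext p
  simp only [mem_pairsOf, Finset.mem_sdiff, SimpleGraph.compl_adj, SimpleGraph.top_adj]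
  constructor
  · rintro ⟨⟨hne, hnadj⟩, hlt⟩
    exact ⟨⟨hne, hlt⟩, fun h => hnadj h.1⟩
  · rintro ⟨⟨hne, hlt⟩, h⟩
    exact ⟨⟨hne, fun hadj => h ⟨hadj, hlt⟩⟩, hlt⟩

lemma pairsOf_subset_top (K : SimpleGraph (Fin n)) :
    pairsOf K ⊆ pairsOf (⊤ : SimpleGraph (Fin n)) := by
  intro p hp
  obtain ⟨hadj, hlt⟩ := mem_pairsOf.mp hp
  exact mem_pairsOf.mpr ⟨(SimpleGraph.top_adj p.1 p.2).mpr hadj.ne, hlt⟩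

lemma matching_compat (H : SimpleGraph (Fin n))
    (hmatch : ∀ v u w : Fin n, Hᶜ.Adj v u → Hᶜ.Adj v w → u = w) :
    ∀ T ⊆ pairsOf Hᶜ, Compat T := by
  intro T hT
  constructor
  · intro p hp q hq h
    obtain ⟨ha1, -⟩ := mem_pairsOf.mp (hT hp)
    obtain ⟨ha2, -⟩ := mem_pairsOf.mp (hT hq)
    rw [← h] at ha2
    exact Prod.ext h (hmatch p.1 p.2 q.2 ha1 ha2)
  · intro p hp q hq h
    obtain ⟨ha1, -⟩ := mem_pairsOf.mp (hT hp)
    obtain ⟨ha2, -⟩ := mem_pairsOf.mp (hT hq)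
    rw [← h] at ha2
    exact Prod.ext (hmatch p.2 p.1 q.1 ha1.symm ha2.symm) h

end AOProof

/-- For `m ≥ C(n,2) - ⌊n/2⌋`, among all simple graphs on `n` vertices with `m`
edges, any graph whose complement is a matching maximizes the number of acyclic
orientations. -/
theorem ao_maximizer_complement_matching (n m : ℕ) (hn : 1 ≤ n)
    (hm : Nat.choose n 2 - n / 2 ≤ m)
    (G H : SimpleGraph (Fin n))
    (hG : G.edgeSet.ncard = m) (hH : H.edgeSet.ncard = m)
    (hmatch : ∀ v u w : Fin n, Hᶜ.Adj v u → Hᶜ.Adj v w → u = w) :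
    aoCount G ≤ aoCount H := by
  have hcard : (AOProof.pairsOf Gᶜ).card = (AOProof.pairsOf Hᶜ).card := by
    rw [AOProof.pairsOf_compl G, AOProof.pairsOf_compl H,
      Finset.card_sdiff_of_subset (AOProof.pairsOf_subset_top G),
      Finset.card_sdiff_of_subset (AOProof.pairsOf_subset_top H),
      AOProof.pairs_card G, AOProof.pairs_card H, hG, hH]
  calc aoCount G ≤ (AOProof.Good (AOProof.pairsOf Gᶜ)).card := AOProof.aoCount_le_good G
    _ ≤ (AOProof.Good (AOProof.pairsOf Hᶜ)).card :=
        AOProof.good_card_le _ _ AOProof.pairsOf_lt AOProof.pairsOf_lt hcard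
          (AOProof.matching_compat H hmatch)
    _ = aoCount H := (AOProof.aoCount_eq_good H hmatch).symm
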